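/- Let g(·;θ₁,θ₂,ρ) be the bivariate exponential model pmf on {0,1}². For every B > 0 there exist δ, C₇ > 0 such that for all θ₁,θ₂,ϑ₁,ϑ₂ ∈ [-2B,2B] and ρ,ϱ ∈ [-B,B] with |θ₁-ϑ₁| + |θ₂-ϑ₂| + |ρ-ϱ| ≤ δ: E_{Y∼g(·;θ₁,θ₂,ρ)}[log g(Y;θ₁,θ₂,ρ)] - E_{Y∼g(·;θ₁,θ₂,ρ)}[log g(Y;ϑ₁,ϑ₂,ϱ)] ≥ C₇·((θ₁-ϑ₁)² + (θ₂-ϑ₂)² + (ρ-ϱ)²). -/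

import Mathlib

/-- The pmf of the bivariate exponential network model with interaction effect. -/
noncomputable def expPMF (a₁ a₂ θ₁ θ₂ ρ : ℝ) : ℝ :=
  Real.exp (θ₁ * a₁ + θ₂ * a₂ + ρ * a₁ * a₂) /
    (1 + Real.exp θ₁ + Real.exp θ₂ + Real.exp (θ₁ + θ₂ + ρ))

lemma Z_pos' (θ₁ θ₂ ρ : ℝ) :
    0 < 1 + Real.exp θ₁ + Real.exp θ₂ + Real.exp (θ₁+θ₂+ρ) := by positivity

/-- Pointwise quadratic refinement of `p log(p/q) ≥ p - q` for `p, q ∈ (0,1]`. -/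
lemma key1' (p q : ℝ) (hp : 0 < p) (hq : 0 < q) (hp1 : p ≤ 1) (hq1 : q ≤ 1) :
    (p - q) + (p - q)^2/4 ≤ p * (Real.log p - Real.log q) := by
  set u := Real.sqrt p with hu
  set v := Real.sqrt q with hv
  have hu2 : u^2 = p := Real.sq_sqrt hp.le
  have hv2 : v^2 = q := Real.sq_sqrt hq.le
  have hup : 0 < u := Real.sqrt_pos.2 hp
  have hvp : 0 < v := Real.sqrt_pos.2 hq
  have hu1 : u ≤ 1 := by nlinarith
  have hv1 : v ≤ 1 := by nlinarith
  have hlog : Real.log (v/u) ≤ v/u - 1 := Real.log_le_sub_one_of_pos (by positivity)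
  have hld : Real.log (v/u) = Real.log q / 2 - Real.log p / 2 := by
    rw [Real.log_div hvp.ne' hup.ne', hu, hv, Real.log_sqrt hp.le, Real.log_sqrt hq.le]
  rw [hld] at hlog
  have h2 : p * (Real.log q - Real.log p) ≤ 2*u*v - 2*p := by
    have h3 := mul_le_mul_of_nonneg_left hlog (by positivity : (0:ℝ) ≤ 2*p)
    have hpu : 2*p*(v/u - 1) = 2*u*v - 2*p := by
      field_simp
      nlinarith
    nlinarith [h3]
  nlinarith [sq_nonneg (u - v), sq_nonneg ((u-v)*(u+v)),
    mul_nonneg (sq_nonneg (u-v)) (by nlinarith : (0:ℝ) ≤ 4 - (u+v)^2)]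

lemma lip0' (ε p q : ℝ) (hε : 0 < ε) (hp : ε ≤ p) (hq : ε ≤ q) (hqp : q ≤ p) :
    Real.log p - Real.log q ≤ (p - q) / ε := by
  have hq0 : 0 < q := lt_of_lt_of_le hε hq
  have hp0 : 0 < p := lt_of_lt_of_le hε hp
  have h := Real.log_le_sub_one_of_pos (show 0 < p/q by positivity)
  rw [Real.log_div hp0.ne' hq0.ne'] at h
  have h1 : p/q - 1 = (p-q)/q := by field_simp
  rw [h1] at h
  have h2 : (p-q)/q ≤ (p-q)/ε := by
    apply div_le_div_of_nonneg_left (by linarith) hε hq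
  linarith

/-- `log` is `1/ε`-Lipschitz on `[ε, ∞)`. -/
lemma lip' (ε p q : ℝ) (hε : 0 < ε) (hp : ε ≤ p) (hq : ε ≤ q) :
    |Real.log p - Real.log q| ≤ |p - q| / ε := by
  rcases le_total q p with h | h
  · rw [abs_of_nonneg (by linarith : (0:ℝ) ≤ p - q),
      abs_of_nonneg (sub_nonneg.2 (Real.log_le_log (lt_of_lt_of_le hε hq) h))]
    exact lip0' ε p q hε hp hq h
  · rw [abs_of_nonpos (by linarith : p - q ≤ 0),
      abs_of_nonpos (sub_nonpos.2 (Real.log_le_log (lt_of_lt_of_le hε hp) h))]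
    have h4 := lip0' ε q p hε hq hp h
    rw [neg_sub, neg_sub]
    linarith

lemma expPMF_le_one' (a₁ a₂ θ₁ θ₂ ρ : ℝ) (h1 : a₁ = 0 ∨ a₁ = 1) (h2 : a₂ = 0 ∨ a₂ = 1) :
    expPMF a₁ a₂ θ₁ θ₂ ρ ≤ 1 := by
  unfold expPMF
  rw [div_le_one (Z_pos' θ₁ θ₂ ρ)]
  rcases h1 with rfl | rfl <;> rcases h2 with rfl | rfl <;>
    simp <;>
    nlinarith [Real.exp_pos θ₁, Real.exp_pos θ₂, Real.exp_pos (θ₁+θ₂+ρ),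
      Real.exp_pos (θ₁+θ₂), Real.add_one_le_exp θ₁, Real.add_one_le_exp θ₂]

lemma expPMF_ge' (B θ₁ θ₂ ρ a₁ a₂ : ℝ) (hB : 0 < B)
    (ht1 : |θ₁| ≤ 2*B) (ht2 : |θ₂| ≤ 2*B) (hr : |ρ| ≤ B)
    (h1 : a₁ = 0 ∨ a₁ = 1) (h2 : a₂ = 0 ∨ a₂ = 1) :
    Real.exp (-(10*B))/4 ≤ expPMF a₁ a₂ θ₁ θ₂ ρ := by
  unfold expPMF
  rw [abs_le] at ht1 ht2 hr
  have hN : Real.exp (-(5*B)) ≤ Real.exp (θ₁ * a₁ + θ₂ * a₂ + ρ * a₁ * a₂) := by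
    apply Real.exp_le_exp.2
    rcases h1 with rfl | rfl <;> rcases h2 with rfl | rfl <;> ring_nf <;> linarith
  have hZ : (1 + Real.exp θ₁ + Real.exp θ₂ + Real.exp (θ₁+θ₂+ρ)) ≤ 4 * Real.exp (5*B) := by
    have e1 : Real.exp θ₁ ≤ Real.exp (5*B) := Real.exp_le_exp.2 (by linarith)
    have e2 : Real.exp θ₂ ≤ Real.exp (5*B) := Real.exp_le_exp.2 (by linarith)
    have e3 : Real.exp (θ₁+θ₂+ρ) ≤ Real.exp (5*B) := Real.exp_le_exp.2 (by linarith)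
    have e4 : (1:ℝ) ≤ Real.exp (5*B) := by
      rw [Real.one_le_exp_iff]; linarith
    linarith
  rw [div_le_div_iff₀ (by norm_num) (Z_pos' θ₁ θ₂ ρ)]
  have hmul : Real.exp (-(10*B)) * Real.exp (5*B) = Real.exp (-(5*B)) := by
    rw [← Real.exp_add]; ring_nf
  nlinarith [Real.exp_pos (-(10*B)), Real.exp_pos (-(5*B)), hN, hZ, hmul,
    Real.exp_pos (5*B)]

lemma log_expPMF' (a₁ a₂ θ₁ θ₂ ρ : ℝ) :
    Real.log (expPMF a₁ a₂ θ₁ θ₂ ρ) = (θ₁*a₁+θ₂*a₂+ρ*a₁*a₂)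
      - Real.log (1 + Real.exp θ₁ + Real.exp θ₂ + Real.exp (θ₁+θ₂+ρ)) := by
  unfold expPMF
  rw [Real.log_div (Real.exp_ne_zero _) (Z_pos' θ₁ θ₂ ρ).ne', Real.log_exp]

lemma sum_expPMF' (θ₁ θ₂ ρ : ℝ) :
    expPMF 0 0 θ₁ θ₂ ρ + expPMF 0 1 θ₁ θ₂ ρ + expPMF 1 0 θ₁ θ₂ ρ
      + expPMF 1 1 θ₁ θ₂ ρ = 1 := by
  unfold expPMF
  have hZ := (Z_pos' θ₁ θ₂ ρ).ne'
  field_simp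
  ring_nf
  rw [Real.exp_zero]

lemma sq2' (ε x a b : ℝ) (hε : 0 < ε) (h : |x| ≤ (|a| + |b|)/ε) :
    ε^2 * x^2 ≤ 2*(a^2 + b^2) := by
  have h' : |x| * ε ≤ |a| + |b| := (le_div_iff₀ hε).1 h
  nlinarith [sq_abs x, sq_abs a, sq_abs b, abs_nonneg x, abs_nonneg a, abs_nonneg b,
    sq_nonneg (|a| - |b|), mul_self_le_mul_self (by positivity : (0:ℝ) ≤ |x| * ε) h']

lemma sq4' (ε x a b c d : ℝ) (hε : 0 < ε) (h : |x| ≤ (|a| + |b| + |c| + |d|)/ε) :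
    ε^2 * x^2 ≤ 4*(a^2 + b^2 + c^2 + d^2) := by
  have h' : |x| * ε ≤ |a| + |b| + |c| + |d| := (le_div_iff₀ hε).1 h
  nlinarith [sq_abs x, sq_abs a, sq_abs b, sq_abs c, sq_abs d,
    abs_nonneg x, abs_nonneg a, abs_nonneg b, abs_nonneg c, abs_nonneg d,
    sq_nonneg (|a| - |b|), sq_nonneg (|a| - |c|), sq_nonneg (|a| - |d|),
    sq_nonneg (|b| - |c|), sq_nonneg (|b| - |d|), sq_nonneg (|c| - |d|),
    mul_self_le_mul_self (by positivity : (0:ℝ) ≤ |x| * ε) h']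

lemma abs4' (X Y Z W : ℝ) : |X - Y - Z + W| ≤ |X| + |Y| + |Z| + |W| := by
  calc |X - Y - Z + W| ≤ |X - Y - Z| + |W| := abs_add_le _ _
    _ ≤ |X - Y| + |Z| + |W| := by
        have := abs_sub (X - Y) Z
        linarith
    _ ≤ |X| + |Y| + |Z| + |W| := by
        have := abs_sub X Y
        linarith

set_option maxHeartbeats 1000000 in
/-- Local quadratic lower bound on the KL divergence, uniform over the compact
parameter region. -/
theorem stmt_8 (B : ℝ) (hB : 0 < B) :
    ∃ δ C₇ : ℝ, 0 < δ ∧ 0 < C₇ ∧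
      ∀ θ₁ θ₂ ϑ₁ ϑ₂ ρ ϱ : ℝ,
        θ₁ ∈ Set.Icc (-2 * B) (2 * B) → θ₂ ∈ Set.Icc (-2 * B) (2 * B) →
        ϑ₁ ∈ Set.Icc (-2 * B) (2 * B) → ϑ₂ ∈ Set.Icc (-2 * B) (2 * B) →
        ρ ∈ Set.Icc (-B) B → ϱ ∈ Set.Icc (-B) B →
        |θ₁ - ϑ₁| + |θ₂ - ϑ₂| + |ρ - ϱ| ≤ δ →
        C₇ * ((θ₁ - ϑ₁) ^ 2 + (θ₂ - ϑ₂) ^ 2 + (ρ - ϱ) ^ 2) ≤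
          (∑ a : Fin 2 × Fin 2,
              expPMF (a.1 : ℝ) (a.2 : ℝ) θ₁ θ₂ ρ *
                Real.log (expPMF (a.1 : ℝ) (a.2 : ℝ) θ₁ θ₂ ρ)) -
            (∑ a : Fin 2 × Fin 2,
              expPMF (a.1 : ℝ) (a.2 : ℝ) θ₁ θ₂ ρ *
                Real.log (expPMF (a.1 : ℝ) (a.2 : ℝ) ϑ₁ ϑ₂ ϱ)) := by
  set ε : ℝ := Real.exp (-(10*B))/4 with hεdef
  have hε : 0 < ε := by positivity
  refine ⟨1, ε^2/32, one_pos, by positivity, ?_⟩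
  intro θ₁ θ₂ ϑ₁ ϑ₂ ρ ϱ h1 h2 h3 h4 h5 h6 _
  rw [Set.mem_Icc] at h1 h2 h3 h4 h5 h6
  simp only [Fintype.sum_prod_type, Fin.sum_univ_two, Fin.val_zero, Fin.val_one,
    Nat.cast_zero, Nat.cast_one]
  -- abbreviations
  set p00 := expPMF 0 0 θ₁ θ₂ ρ with hp00
  set p01 := expPMF 0 1 θ₁ θ₂ ρ with hp01
  set p10 := expPMF 1 0 θ₁ θ₂ ρ with hp10
  set p11 := expPMF 1 1 θ₁ θ₂ ρ with hp11
  set q00 := expPMF 0 0 ϑ₁ ϑ₂ ϱ with hq00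
  set q01 := expPMF 0 1 ϑ₁ ϑ₂ ϱ with hq01
  set q10 := expPMF 1 0 ϑ₁ ϑ₂ ϱ with hq10
  set q11 := expPMF 1 1 ϑ₁ ϑ₂ ϱ with hq11
  -- bounds on coordinates
  have ht1 : |θ₁| ≤ 2*B := abs_le.2 ⟨by linarith [h1.1], by linarith [h1.2]⟩
  have ht2 : |θ₂| ≤ 2*B := abs_le.2 ⟨by linarith [h2.1], by linarith [h2.2]⟩
  have ht3 : |ϑ₁| ≤ 2*B := abs_le.2 ⟨by linarith [h3.1], by linarith [h3.2]⟩
  have ht4 : |ϑ₂| ≤ 2*B := abs_le.2 ⟨by linarith [h4.1], by linarith [h4.2]⟩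
  have hr1 : |ρ| ≤ B := abs_le.2 ⟨h5.1, h5.2⟩
  have hr2 : |ϱ| ≤ B := abs_le.2 ⟨h6.1, h6.2⟩
  -- pmf bounds
  have b00 : ε ≤ p00 := expPMF_ge' B θ₁ θ₂ ρ 0 0 hB ht1 ht2 hr1 (Or.inl rfl) (Or.inl rfl)
  have b01 : ε ≤ p01 := expPMF_ge' B θ₁ θ₂ ρ 0 1 hB ht1 ht2 hr1 (Or.inl rfl) (Or.inr rfl)
  have b10 : ε ≤ p10 := expPMF_ge' B θ₁ θ₂ ρ 1 0 hB ht1 ht2 hr1 (Or.inr rfl) (Or.inl rfl)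
  have b11 : ε ≤ p11 := expPMF_ge' B θ₁ θ₂ ρ 1 1 hB ht1 ht2 hr1 (Or.inr rfl) (Or.inr rfl)
  have c00 : ε ≤ q00 := expPMF_ge' B ϑ₁ ϑ₂ ϱ 0 0 hB ht3 ht4 hr2 (Or.inl rfl) (Or.inl rfl)
  have c01 : ε ≤ q01 := expPMF_ge' B ϑ₁ ϑ₂ ϱ 0 1 hB ht3 ht4 hr2 (Or.inl rfl) (Or.inr rfl)
  have c10 : ε ≤ q10 := expPMF_ge' B ϑ₁ ϑ₂ ϱ 1 0 hB ht3 ht4 hr2 (Or.inr rfl) (Or.inl rfl)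
  have c11 : ε ≤ q11 := expPMF_ge' B ϑ₁ ϑ₂ ϱ 1 1 hB ht3 ht4 hr2 (Or.inr rfl) (Or.inr rfl)
  have u00 : p00 ≤ 1 := expPMF_le_one' 0 0 θ₁ θ₂ ρ (Or.inl rfl) (Or.inl rfl)
  have u01 : p01 ≤ 1 := expPMF_le_one' 0 1 θ₁ θ₂ ρ (Or.inl rfl) (Or.inr rfl)
  have u10 : p10 ≤ 1 := expPMF_le_one' 1 0 θ₁ θ₂ ρ (Or.inr rfl) (Or.inl rfl)
  have u11 : p11 ≤ 1 := expPMF_le_one' 1 1 θ₁ θ₂ ρ (Or.inr rfl) (Or.inr rfl)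
  have v00 : q00 ≤ 1 := expPMF_le_one' 0 0 ϑ₁ ϑ₂ ϱ (Or.inl rfl) (Or.inl rfl)
  have v01 : q01 ≤ 1 := expPMF_le_one' 0 1 ϑ₁ ϑ₂ ϱ (Or.inl rfl) (Or.inr rfl)
  have v10 : q10 ≤ 1 := expPMF_le_one' 1 0 ϑ₁ ϑ₂ ϱ (Or.inr rfl) (Or.inl rfl)
  have v11 : q11 ≤ 1 := expPMF_le_one' 1 1 ϑ₁ ϑ₂ ϱ (Or.inr rfl) (Or.inr rfl)
  -- key pointwise inequalities
  have k00 := key1' p00 q00 (lt_of_lt_of_le hε b00) (lt_of_lt_of_le hε c00) u00 v00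
  have k01 := key1' p01 q01 (lt_of_lt_of_le hε b01) (lt_of_lt_of_le hε c01) u01 v01
  have k10 := key1' p10 q10 (lt_of_lt_of_le hε b10) (lt_of_lt_of_le hε c10) u10 v10
  have k11 := key1' p11 q11 (lt_of_lt_of_le hε b11) (lt_of_lt_of_le hε c11) u11 v11
  -- sums to one
  have hsp := sum_expPMF' θ₁ θ₂ ρ
  have hsq := sum_expPMF' ϑ₁ ϑ₂ ϱ
  rw [← hp00, ← hp01, ← hp10, ← hp11] at hsp
  rw [← hq00, ← hq01, ← hq10, ← hq11] at hsq
  -- log difference identities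
  have e00 : Real.log p00 - Real.log q00 =
      (Real.log (1 + Real.exp ϑ₁ + Real.exp ϑ₂ + Real.exp (ϑ₁+ϑ₂+ϱ))
        - Real.log (1 + Real.exp θ₁ + Real.exp θ₂ + Real.exp (θ₁+θ₂+ρ))) := by
    rw [hp00, hq00, log_expPMF', log_expPMF']; ring
  have e01 : Real.log p01 - Real.log q01 = (θ₂ - ϑ₂) +
      (Real.log (1 + Real.exp ϑ₁ + Real.exp ϑ₂ + Real.exp (ϑ₁+ϑ₂+ϱ))
        - Real.log (1 + Real.exp θ₁ + Real.exp θ₂ + Real.exp (θ₁+θ₂+ρ))) := by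
    rw [hp01, hq01, log_expPMF', log_expPMF']; ring
  have e10 : Real.log p10 - Real.log q10 = (θ₁ - ϑ₁) +
      (Real.log (1 + Real.exp ϑ₁ + Real.exp ϑ₂ + Real.exp (ϑ₁+ϑ₂+ϱ))
        - Real.log (1 + Real.exp θ₁ + Real.exp θ₂ + Real.exp (θ₁+θ₂+ρ))) := by
    rw [hp10, hq10, log_expPMF', log_expPMF']; ring
  have e11 : Real.log p11 - Real.log q11 = (θ₁ - ϑ₁) + (θ₂ - ϑ₂) + (ρ - ϱ) +
      (Real.log (1 + Real.exp ϑ₁ + Real.exp ϑ₂ + Real.exp (ϑ₁+ϑ₂+ϱ))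
        - Real.log (1 + Real.exp θ₁ + Real.exp θ₂ + Real.exp (θ₁+θ₂+ρ))) := by
    rw [hp11, hq11, log_expPMF', log_expPMF']; ring
  -- Lipschitz bounds
  have l00 := lip' ε p00 q00 hε b00 c00
  have l01 := lip' ε p01 q01 hε b01 c01
  have l10 := lip' ε p10 q10 hε b10 c10
  have l11 := lip' ε p11 q11 hε b11 c11
  -- parameter difference bounds
  have d1 : |θ₁ - ϑ₁| ≤ (|p10 - q10| + |p00 - q00|)/ε := by
    have hid : θ₁ - ϑ₁ = (Real.log p10 - Real.log q10) - (Real.log p00 - Real.log q00) := by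
      rw [e10, e00]; ring
    rw [hid]
    calc |(Real.log p10 - Real.log q10) - (Real.log p00 - Real.log q00)|
        ≤ |Real.log p10 - Real.log q10| + |Real.log p00 - Real.log q00| := abs_sub _ _
      _ ≤ (|p10 - q10| + |p00 - q00|)/ε := by rw [add_div]; exact add_le_add l10 l00
  have d2 : |θ₂ - ϑ₂| ≤ (|p01 - q01| + |p00 - q00|)/ε := by
    have hid : θ₂ - ϑ₂ = (Real.log p01 - Real.log q01) - (Real.log p00 - Real.log q00) := by
      rw [e01, e00]; ring
    rw [hid]
    calc |(Real.log p01 - Real.log q01) - (Real.log p00 - Real.log q00)|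
        ≤ |Real.log p01 - Real.log q01| + |Real.log p00 - Real.log q00| := abs_sub _ _
      _ ≤ (|p01 - q01| + |p00 - q00|)/ε := by rw [add_div]; exact add_le_add l01 l00
  have d3 : |ρ - ϱ| ≤ (|p11 - q11| + |p10 - q10| + |p01 - q01| + |p00 - q00|)/ε := by
    have hid : ρ - ϱ = (Real.log p11 - Real.log q11) - (Real.log p10 - Real.log q10)
        - (Real.log p01 - Real.log q01) + (Real.log p00 - Real.log q00) := by
      rw [e11, e10, e01, e00]; ring
    rw [hid]
    calc |(Real.log p11 - Real.log q11) - (Real.log p10 - Real.log q10)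
        - (Real.log p01 - Real.log q01) + (Real.log p00 - Real.log q00)|
        ≤ |Real.log p11 - Real.log q11| + |Real.log p10 - Real.log q10|
          + |Real.log p01 - Real.log q01| + |Real.log p00 - Real.log q00| := abs4' _ _ _ _
      _ ≤ (|p11 - q11| + |p10 - q10| + |p01 - q01| + |p00 - q00|)/ε := by
          rw [add_div, add_div, add_div]
          exact add_le_add (add_le_add (add_le_add l11 l10) l01) l00
  -- squared versions
  have s1 := sq2' ε (θ₁ - ϑ₁) (p10 - q10) (p00 - q00) hε d1
  have s2 := sq2' ε (θ₂ - ϑ₂) (p01 - q01) (p00 - q00) hε d2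
  have s3 := sq4' ε (ρ - ϱ) (p11 - q11) (p10 - q10) (p01 - q01) (p00 - q00) hε d3
  -- KL lower bound
  linarith [k00, k01, k10, k11, s1, s2, s3, hsp, hsq, sq_nonneg (p00 - q00),
    sq_nonneg (p01 - q01), sq_nonneg (p10 - q10), sq_nonneg (p11 - q11)]
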